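/- For every integer m ≥ 0, the characteristic polynomial of the 3×3 integer matrix with rows (0,0,1), (1,0,−m−5), (0,1,m+6) equals X³ − (m+6)X² + (m+5)X − 1; it is irreducible over ℚ and has three distinct positive real roots. -/

import Mathlib

open Matrix Polynomial

/-- An integer polynomial has three distinct positive real roots. -/
def hasThreeDistinctPositiveRealRoots (p : Polynomial ℤ) : Prop :=
  ∃ x y z : ℝ, x ≠ y ∧ x ≠ z ∧ y ≠ z ∧ 0 < x ∧ 0 < y ∧ 0 < z ∧
    (p.map (Int.castRingHom ℝ)).IsRoot x ∧
    (p.map (Int.castRingHom ℝ)).IsRoot y ∧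
    (p.map (Int.castRingHom ℝ)).IsRoot z

theorem charpoly_korkina_sequence (m : ℤ) (hm : 0 ≤ m) :
    (!![0, 0, 1; 1, 0, -m - 5; 0, 1, m + 6] : Matrix (Fin 3) (Fin 3) ℤ).charpoly
        = X ^ 3 - C (m + 6) * X ^ 2 + C (m + 5) * X - 1 ∧
    Irreducible
      (((!![0, 0, 1; 1, 0, -m - 5; 0, 1, m + 6] : Matrix (Fin 3) (Fin 3) ℤ).charpoly).map
        (Int.castRingHom ℚ)) ∧
    hasThreeDistinctPositiveRealRoots
      (!![0, 0, 1; 1, 0, -m - 5; 0, 1, m + 6] : Matrix (Fin 3) (Fin 3) ℤ).charpoly := by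
  set M : Matrix (Fin 3) (Fin 3) ℤ := !![0, 0, 1; 1, 0, -m - 5; 0, 1, m + 6] with hM
  have hcp : M.charpoly = X ^ 3 - C (m + 6) * X ^ 2 + C (m + 5) * X - 1 := by
    rw [Matrix.charpoly, Matrix.det_fin_three]
    simp [charmatrix_apply, hM]
    ring
  have hmon : M.charpoly.Monic := Matrix.charpoly_monic M
  refine ⟨hcp, ?_, ?_⟩
  · -- irreducibility over ℚ
    set q : Polynomial ℚ := M.charpoly.map (Int.castRingHom ℚ) with hq
    have hqeq : q = X ^ 3 - C ((m : ℚ) + 6) * X ^ 2 + C ((m : ℚ) + 5) * X - 1 := by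
      rw [hq, hcp]; simp [Polynomial.map_sub, Polynomial.map_add, Polynomial.map_mul,
        Polynomial.map_pow, Polynomial.map_one, map_ofNat]
    have hdeg : q.natDegree = 3 := by
      rw [hqeq]; compute_degree!
    rw [irreducible_iff_roots_eq_zero_of_degree_le_three (by omega) (by omega)]
    rw [Multiset.eq_zero_iff_forall_notMem]
    intro r hr
    have hq0 : q ≠ 0 := fun h => by simp [h] at hdeg
    have hroot : aeval r M.charpoly = 0 := by
      have h := (Polynomial.mem_roots hq0).1 hr
      rw [Polynomial.IsRoot, hq, Polynomial.eval_map] at h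
      exact h
    obtain ⟨n, hn⟩ := isInteger_of_is_root_of_monic hmon hroot
    rw [← hn] at hroot
    have hz : n ^ 3 - (m + 6) * n ^ 2 + (m + 5) * n - 1 = 0 := by
      have : aeval ((n : ℚ)) M.charpoly = 0 := hroot
      rw [hcp] at this
      simp only [map_sub, map_add, _root_.map_mul, map_pow, aeval_X, aeval_C,
        _root_.map_one, eq_intCast, map_ofNat, map_intCast] at this
      have h2 : ((n ^ 3 - (m + 6) * n ^ 2 + (m + 5) * n - 1 : ℤ) : ℚ) = 0 := by
        push_cast
        linarith [this]
      exact_mod_cast h2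
    have hunit : n = 1 ∨ n = -1 := by
      have h1 : n * (n ^ 2 - (m + 6) * n + (m + 5)) = 1 := by ring_nf; ring_nf at hz; linarith
      exact Int.isUnit_iff.1 (IsUnit.of_mul_eq_one _ h1)
    rcases hunit with rfl | rfl <;> norm_num at hz <;> omega
  · -- three distinct positive real roots
    have heval : ∀ x : ℝ, (M.charpoly.map (Int.castRingHom ℝ)).eval x
        = x ^ 3 - ((m : ℝ) + 6) * x ^ 2 + ((m : ℝ) + 5) * x - 1 := by
      intro x
      rw [hcp]
      simp [Polynomial.map_sub, Polynomial.map_add, Polynomial.map_mul, Polynomial.map_pow]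
    set f : ℝ → ℝ := fun x => (M.charpoly.map (Int.castRingHom ℝ)).eval x with hf
    have hcont : Continuous f := Polynomial.continuous _
    have hm' : (0 : ℝ) ≤ (m : ℝ) := by exact_mod_cast hm
    have h0 : f 0 < 0 := by rw [hf]; simp only [heval]; nlinarith
    have hhalf : 0 < f (1/2) := by rw [hf]; simp only [heval]; nlinarith
    have h1 : f 1 < 0 := by rw [hf]; simp only [heval]; nlinarith
    have hbig : 0 < f ((m : ℝ) + 6) := by rw [hf]; simp only [heval]; nlinarith
    obtain ⟨x, hx, hfx⟩ := intermediate_value_Ioo (by norm_num : (0:ℝ) ≤ 1/2)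
      hcont.continuousOn (Set.mem_Ioo.2 ⟨h0, hhalf⟩)
    obtain ⟨y, hy, hfy⟩ := intermediate_value_Ioo' (by norm_num : (1/2:ℝ) ≤ 1)
      hcont.continuousOn (Set.mem_Ioo.2 ⟨h1, hhalf⟩)
    obtain ⟨z, hz, hfz⟩ := intermediate_value_Ioo (by linarith : (1:ℝ) ≤ (m:ℝ) + 6)
      hcont.continuousOn (Set.mem_Ioo.2 ⟨h1, hbig⟩)
    exact ⟨x, y, z, by linarith [hx.2, hy.1], by linarith [hx.2, hz.1],
      by linarith [hy.2, hz.1], hx.1, by linarith [hy.1], by linarith [hz.1],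
      hfx, hfy, hfz⟩
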